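/- Let α ≥ β > 1/2 and set B₁(x) = (2k+α+β+1)^2 (1-x^2) - 2(1+x)α^2 - 2(1-x)β^2 + 1 for k a positive integer. Then B₁(-1) ≤ 0, B₁(1) ≤ 0, and B₁((β-α)/(α+β+1)) > 0; consequently B₁ has exactly two zeros in [-1,1]. -/
import Mathlib

theorem B1_two_zeros (k : ℕ) (hk : 1 ≤ k) (α β : ℝ)
    (hβ : 1 / 2 < β) (hαβ : β ≤ α)
    (B₁ : ℝ → ℝ)
    (hB₁ : ∀ x, B₁ x = (2 * k + α + β + 1) ^ 2 * (1 - x ^ 2)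
        - 2 * (1 + x) * α ^ 2 - 2 * (1 - x) * β ^ 2 + 1) :
    B₁ (-1) ≤ 0 ∧ B₁ 1 ≤ 0 ∧ 0 < B₁ ((β - α) / (α + β + 1)) ∧
      ({x ∈ Set.Icc (-1 : ℝ) 1 | B₁ x = 0}).ncard = 2 := by
  have hα : 1 / 2 < α := lt_of_lt_of_le hβ hαβ
  have hk1 : (1 : ℝ) ≤ (k : ℝ) := by exact_mod_cast hk
  obtain ⟨S, hS⟩ : ∃ S : ℝ, S = 2 * k + α + β + 1 := ⟨_, rfl⟩
  obtain ⟨T, hT⟩ : ∃ T : ℝ, T = α + β + 1 := ⟨_, rfl⟩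
  have hT0 : 0 < T := by rw [hT]; linarith
  have hST : T + 2 ≤ S := by rw [hS, hT]; linarith
  have hS0 : 0 < S := by linarith
  obtain ⟨m, hm⟩ : ∃ m : ℝ, m = (β - α) / T := ⟨_, rfl⟩
  have hm1 : -1 < m := by
    rw [hm, lt_div_iff₀ hT0]; rw [hT]; linarith
  have hm0 : m ≤ 0 := by
    rw [hm]
    apply div_nonpos_of_nonpos_of_nonneg <;> linarith
  -- coefficients of the quadratic
  obtain ⟨a, ha⟩ : ∃ a : ℝ, a = S ^ 2 := ⟨_, rfl⟩
  obtain ⟨b, hb⟩ : ∃ b : ℝ, b = 2 * (β ^ 2 - α ^ 2) := ⟨_, rfl⟩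
  obtain ⟨c, hc⟩ : ∃ c : ℝ, c = S ^ 2 - 2 * α ^ 2 - 2 * β ^ 2 + 1 := ⟨_, rfl⟩
  have ha0 : 0 < a := by rw [ha]; positivity
  have habc : ∀ x, B₁ x = -a * x ^ 2 + b * x + c := by
    intro x; rw [hB₁ x, ha, hb, hc, hS]; ring
  -- values at the endpoints
  have hBneg1 : B₁ (-1) ≤ 0 := by rw [hB₁]; nlinarith [hβ]
  have hB1le : B₁ 1 ≤ 0 := by rw [hB₁]; nlinarith [hα]
  -- value at m
  have hkey : B₁ m * T ^ 2 =
      S ^ 2 * (2 * β + 1) * (2 * α + 1) - 2 * (2 * β + 1) * α ^ 2 * T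
        - 2 * (2 * α + 1) * β ^ 2 * T + T ^ 2 := by
    rw [hB₁ m, hm, hS, hT]; field_simp; ring
  have hid : S ^ 2 * (2 * β + 1) * (2 * α + 1) - 2 * (2 * β + 1) * α ^ 2 * T
        - 2 * (2 * α + 1) * β ^ 2 * T + T ^ 2
      = (S ^ 2 - (T + 2) ^ 2) * ((2 * α + 1) * (2 * β + 1))
        + 2 * ((2 * α + 1) * (2 * β + 1)) * (3 * T + 2) := by
    rw [hT]; ring
  have huv : 0 < (2 * α + 1) * (2 * β + 1) := by
    apply mul_pos <;> linarith
  have hS2 : (T + 2) ^ 2 ≤ S ^ 2 := by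
    apply pow_le_pow_left₀ (by linarith) hST
  have hrpos : 0 < S ^ 2 * (2 * β + 1) * (2 * α + 1) - 2 * (2 * β + 1) * α ^ 2 * T
        - 2 * (2 * α + 1) * β ^ 2 * T + T ^ 2 := by
    rw [hid]
    have h1 : 0 ≤ (S ^ 2 - (T + 2) ^ 2) * ((2 * α + 1) * (2 * β + 1)) :=
      mul_nonneg (by linarith) huv.le
    have h2 : 0 < 2 * ((2 * α + 1) * (2 * β + 1)) * (3 * T + 2) :=
      mul_pos (mul_pos (by norm_num) huv) (by linarith)
    linarith
  have hBm : 0 < B₁ m := by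
    have hT2 : 0 < T ^ 2 := by positivity
    have hmul : 0 < B₁ m * T ^ 2 := by rw [hkey]; exact hrpos
    rcases mul_pos_iff.mp hmul with ⟨h1, _⟩ | ⟨_, h2⟩
    · exact h1
    · exact absurd hT2 (by linarith)
  have hBm' : 0 < -a * m ^ 2 + b * m + c := by rw [← habc m]; exact hBm
  -- discriminant
  have hD : 0 < b ^ 2 + 4 * a * c := by
    have hident : b ^ 2 + 4 * a * c
        = (b - 2 * a * m) ^ 2 + 4 * (a * (-a * m ^ 2 + b * m + c)) := by ring
    have h1 := mul_pos ha0 hBm'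
    have h2 := sq_nonneg (b - 2 * a * m)
    linarith [hident.ge, hident.le]
  obtain ⟨sd, hsd⟩ : ∃ sd : ℝ, sd = Real.sqrt (b ^ 2 + 4 * a * c) := ⟨_, rfl⟩
  have hsd2 : sd ^ 2 = b ^ 2 + 4 * a * c := by rw [hsd]; exact Real.sq_sqrt hD.le
  have hsd0 : 0 < sd := by rw [hsd]; exact Real.sqrt_pos.2 hD
  obtain ⟨r₁, hr1⟩ : ∃ r : ℝ, r = (b - sd) / (2 * a) := ⟨_, rfl⟩
  obtain ⟨r₂, hr2⟩ : ∃ r : ℝ, r = (b + sd) / (2 * a) := ⟨_, rfl⟩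
  have ha' : a ≠ 0 := ne_of_gt ha0
  have h2a : (2 * a) ≠ 0 := by positivity
  have hl1 : 2 * a * r₁ = b - sd := by rw [hr1]; field_simp
  have hl2 : 2 * a * r₂ = b + sd := by rw [hr2]; field_simp
  have hr12 : r₁ < r₂ := by
    rw [hr1, hr2, div_lt_div_iff₀ (by positivity) (by positivity)]
    have h := mul_pos hsd0 ha0
    linarith [h]
  have hfact : ∀ x, B₁ x = -a * (x - r₁) * (x - r₂) := by
    intro x
    rw [habc x]
    have h4 : (4 * a ^ 2) * (-a * x ^ 2 + b * x + c)
        = (4 * a ^ 2) * (-a * (x - r₁) * (x - r₂)) := by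
      linear_combination (-2 * a ^ 2 * x + 2 * a ^ 2 * r₂) * hl1
        + (-2 * a ^ 2 * x + a * (b - sd)) * hl2 + (-a) * hsd2
    exact mul_left_cancel₀ (show (4 * a ^ 2) ≠ 0 by positivity) h4
  have hzero : ∀ x, B₁ x = 0 ↔ x = r₁ ∨ x = r₂ := by
    intro x
    rw [hfact x]
    constructor
    · intro h
      rcases mul_eq_zero.1 h with h' | h'
      · rcases mul_eq_zero.1 h' with h'' | h''
        · exact absurd h'' (by simp; positivity)
        · exact Or.inl (by linarith [sub_eq_zero.1 h''])
      · exact Or.inr (by linarith [sub_eq_zero.1 h'])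
    · rintro (rfl | rfl) <;> ring
  -- m lies strictly between the roots
  have hBm2 : 0 < -a * (m - r₁) * (m - r₂) := by rw [← hfact m]; exact hBm
  have hprod : (m - r₁) * (m - r₂) < 0 := by
    by_contra h
    push_neg at h
    linarith [mul_nonneg ha0.le h, hBm2]
  have hmr : r₁ < m ∧ m < r₂ := by
    rcases mul_neg_iff.1 hprod with ⟨h1, h2⟩ | ⟨h1, h2⟩
    · exact ⟨by linarith, by linarith⟩
    · exfalso; linarith
  have hr1m := hmr.1
  have hr2m := hmr.2
  -- the roots lie in [-1, 1]
  have hr1ge : -1 ≤ r₁ := by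
    by_contra h
    push_neg at h
    have e := hfact (-1)
    rw [e] at hBneg1
    linarith [mul_pos (mul_pos ha0 (show (0:ℝ) < -1 - r₁ by linarith))
      (show (0:ℝ) < r₂ + 1 by linarith)]
  have hr2le : r₂ ≤ 1 := by
    by_contra h
    push_neg at h
    have e := hfact 1
    rw [e] at hB1le
    linarith [mul_pos (mul_pos ha0 (show (0:ℝ) < 1 - r₁ by linarith))
      (show (0:ℝ) < r₂ - 1 by linarith)]
  -- the zero set
  have hset : {x ∈ Set.Icc (-1 : ℝ) 1 | B₁ x = 0} = {r₁, r₂} := by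
    ext x
    simp only [Set.mem_sep_iff, Set.mem_Icc, Set.mem_insert_iff, Set.mem_singleton_iff]
    constructor
    · rintro ⟨_, hx⟩; exact (hzero x).1 hx
    · rintro (rfl | rfl)
      · exact ⟨⟨by linarith, by linarith⟩, (hzero _).2 (Or.inl rfl)⟩
      · exact ⟨⟨by linarith, by linarith⟩, (hzero _).2 (Or.inr rfl)⟩
  have hgoalm : 0 < B₁ ((β - α) / (α + β + 1)) := by
    rw [← hT, ← hm]; exact hBm
  refine ⟨hBneg1, hB1le, hgoalm, ?_⟩
  rw [hset]
  exact Set.ncard_pair (ne_of_lt hr12)
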